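/- Let f = b⁺ + b⁻ + a⁻ where, on the torus-type region K = {r ≤ |z_1| ≤ R, r ≤ |z_2| ≤ R} ⊂ ℂ² with R/r ≥ 16: a⁻ is holomorphic on {r ≤ |z_1| ≤ R, |z_2| ≤ R} with only negative powers of z_1 in its Laurent expansion, b⁻ is holomorphic on {|z_1| ≤ R, r ≤ |z_2| ≤ R} with only negative powers of z_2, and b⁺ is holomorphic on the full polydisc {|z_1| ≤ R, |z_2| ≤ R}. Then ‖b⁺‖_K ≤ 8‖f‖_K, ‖b⁻‖_K ≤ 8‖f‖_K, and ‖a⁻‖_K ≤ 8‖f‖_K, where ‖·‖_K is the sup norm on K. -/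

import Mathlib

open Filter Bornology

/-- The torus-type region `K = {r ≤ |z₁| ≤ R, r ≤ |z₂| ≤ R} ⊆ ℂ²`. -/
def Kset (r R : ℝ) : Set (ℂ × ℂ) :=
  {z : ℂ × ℂ | r ≤ ‖z.1‖ ∧ ‖z.1‖ ≤ R ∧ r ≤ ‖z.2‖ ∧ ‖z.2‖ ≤ R}

/-- The sup norm `‖h‖_K` over the region `K`. -/
noncomputable def supK (r R : ℝ) (h : ℂ × ℂ → ℂ) : ℝ :=
  ⨆ z : Kset r R, ‖h z.val‖

lemma isCompact_Kset (r R : ℝ) : IsCompact (Kset r R) := by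
  have h1 : Continuous fun z : ℂ × ℂ => ‖z.1‖ := continuous_fst.norm
  have h2 : Continuous fun z : ℂ × ℂ => ‖z.2‖ := continuous_snd.norm
  have hclosed : IsClosed (Kset r R) := by
    simp only [Kset, Set.setOf_and]
    exact ((isClosed_le continuous_const h1).inter ((isClosed_le h1 continuous_const).inter
      ((isClosed_le continuous_const h2).inter (isClosed_le h2 continuous_const))))
  refine (isCompact_closedBall (0 : ℂ × ℂ) R).of_isClosed_subset hclosed ?_
  intro z hz
  simp only [Metric.mem_closedBall, dist_zero_right, Prod.norm_def]
  exact max_le hz.2.1 hz.2.2.2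

lemma norm_le_supK {r R : ℝ} {h : ℂ × ℂ → ℂ} (hc : ContinuousOn h (Kset r R))
    {z : ℂ × ℂ} (hz : z ∈ Kset r R) : ‖h z‖ ≤ supK r R h := by
  have hb : BddAbove ((fun z => ‖h z‖) '' Kset r R) :=
    ((isCompact_Kset r R).image_of_continuousOn hc.norm).bddAbove
  rw [Set.image_eq_range] at hb
  exact le_ciSup hb (⟨z, hz⟩ : Kset r R)

lemma supK_le {r R C : ℝ} {h : ℂ × ℂ → ℂ} (hne : (Kset r R).Nonempty)
    (hC : ∀ z ∈ Kset r R, ‖h z‖ ≤ C) : supK r R h ≤ C := by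
  haveI : Nonempty (Kset r R) := hne.to_subtype
  exact ciSup_le fun z => hC z z.2

lemma supK_nonneg (r R : ℝ) (h : ℂ × ℂ → ℂ) : 0 ≤ supK r R h :=
  Real.iSup_nonneg fun z => norm_nonneg _

/-- Disc maximum principle for a function holomorphic on `{‖w‖ ≤ R}`. -/
lemma MP {h : ℂ → ℂ} {R C : ℝ} (hR : 0 < R)
    (hd : DifferentiableOn ℂ h {w : ℂ | ‖w‖ ≤ R})
    (hC : ∀ w : ℂ, ‖w‖ = R → ‖h w‖ ≤ C) :
    ∀ w : ℂ, ‖w‖ ≤ R → ‖h w‖ ≤ C := by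
  have hset : {w : ℂ | ‖w‖ ≤ R} = Metric.closedBall 0 R := by
    ext w; simp [dist_zero_right]
  rw [hset] at hd
  intro w hw
  have hdc : DiffContOnCl ℂ h (Metric.ball 0 R) := by
    constructor
    · intro u hu
      exact (hd.differentiableAt (Filter.mem_of_superset (Metric.isOpen_ball.mem_nhds hu)
        Metric.ball_subset_closedBall)).differentiableWithinAt
    · rw [closure_ball 0 hR.ne']
      exact hd.continuousOn
  refine Complex.norm_le_of_forall_mem_frontier_norm_le Metric.isBounded_ball hdc ?_ ?_
  · intro u hu
    rw [frontier_ball 0 hR.ne'] at hu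
    exact hC u (by simpa [dist_zero_right] using hu)
  · rw [closure_ball 0 hR.ne']
    simpa [dist_zero_right] using hw

/-- Exterior Schwarz-type estimate: if `g` is holomorphic on `{r ≤ ‖w‖}`, tends to `0`
at infinity, and is bounded by `C` on the circle `‖w‖ = r`, then
`‖g w‖ ≤ (r/‖w‖) C` for `‖w‖ ≥ r`. -/
lemma OV {g : ℂ → ℂ} {r C : ℝ} (hr : 0 < r) (hC : 0 ≤ C)
    (hd : DifferentiableOn ℂ g {w : ℂ | r ≤ ‖w‖})
    (hdecay : Tendsto g (cobounded ℂ) (nhds 0))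
    (hbound : ∀ w : ℂ, ‖w‖ = r → ‖g w‖ ≤ C) :
    ∀ w : ℂ, r ≤ ‖w‖ → ‖g w‖ ≤ r / ‖w‖ * C := by
  have hρ : (0 : ℝ) < r⁻¹ := inv_pos.2 hr
  set G : ℂ → ℂ := fun u => if u = 0 then 0 else g u⁻¹ with hGdef
  have hGne : ∀ u : ℂ, u ≠ 0 → G u = g u⁻¹ := fun u hu => if_neg hu
  have hG0 : G 0 = 0 := if_pos rfl
  have hmap : ∀ u : ℂ, u ≠ 0 → ‖u‖ ≤ r⁻¹ → r ≤ ‖u⁻¹‖ := by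
    intro u hu h
    have hu0 : 0 < ‖u‖ := norm_pos_iff.2 hu
    rw [norm_inv]
    calc r = (r⁻¹)⁻¹ := (inv_inv r).symm
    _ ≤ ‖u‖⁻¹ := inv_anti₀ hu0 h
  have hmaps : ∀ u : ℂ, u ≠ 0 → ‖u‖ < r⁻¹ → r < ‖u⁻¹‖ := by
    intro u hu h
    have hu0 : 0 < ‖u‖ := norm_pos_iff.2 hu
    rw [norm_inv]
    calc r = (r⁻¹)⁻¹ := (inv_inv r).symm
    _ < ‖u‖⁻¹ := by exact inv_strictAnti₀ hu0 h
  have hgat : ∀ w : ℂ, r < ‖w‖ → DifferentiableAt ℂ g w := by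
    intro w hw
    have hopen : IsOpen {w : ℂ | r < ‖w‖} := isOpen_lt continuous_const continuous_norm
    exact hd.differentiableAt
      (Filter.mem_of_superset (hopen.mem_nhds hw) fun x (hx : r < ‖x‖) => le_of_lt hx)
  have hGdiff : DifferentiableOn ℂ G (Metric.ball 0 r⁻¹ \ {0}) := by
    intro u hu
    obtain ⟨hub, hune⟩ := hu
    have hu0 : u ≠ 0 := hune
    have hub' : ‖u‖ < r⁻¹ := by simpa [dist_zero_right] using hub
    have h1 : DifferentiableAt ℂ (fun v : ℂ => g v⁻¹) u :=
      (hgat _ (hmaps u hu0 hub')).comp u (differentiableAt_inv hu0)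
    have hev : G =ᶠ[nhds u] fun v : ℂ => g v⁻¹ :=
      Filter.eventuallyEq_of_mem (isOpen_compl_singleton.mem_nhds hu0) fun v hv => hGne v hv
    exact (h1.congr_of_eventuallyEq hev).differentiableWithinAt
  have hGcont0 : ContinuousAt G 0 := by
    rw [← continuousWithinAt_compl_self]
    have h1 : Tendsto (fun u : ℂ => g u⁻¹) (nhdsWithin 0 {(0:ℂ)}ᶜ) (nhds 0) :=
      hdecay.comp tendsto_inv₀_nhdsNE_zero
    have h2 : G =ᶠ[nhdsWithin 0 {(0:ℂ)}ᶜ] fun u : ℂ => g u⁻¹ :=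
      Filter.eventuallyEq_of_mem self_mem_nhdsWithin fun u hu => hGne u hu
    have : Tendsto G (nhdsWithin 0 {(0:ℂ)}ᶜ) (nhds 0) := Filter.Tendsto.congr' h2.symm h1
    unfold ContinuousWithinAt
    rwa [hG0]
  have hGball : DifferentiableOn ℂ G (Metric.ball 0 r⁻¹) :=
    (Complex.differentiableOn_compl_singleton_and_continuousAt_iff
      (Metric.ball_mem_nhds 0 hρ)).1 ⟨hGdiff, hGcont0⟩
  have hdsl : DifferentiableOn ℂ (dslope G 0) (Metric.ball 0 r⁻¹) :=
    (Complex.differentiableOn_dslope (Metric.ball_mem_nhds 0 hρ)).2 hGball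
  have hds_eq : ∀ v : ℂ, v ≠ 0 → dslope G 0 v = v⁻¹ * g v⁻¹ := by
    intro v hv
    rw [dslope_of_ne _ hv, slope_def_field, hG0, hGne v hv, sub_zero, sub_zero, div_eq_inv_mul]
  have hcont : ContinuousOn (dslope G 0) (Metric.closedBall 0 r⁻¹) := by
    intro u hu
    have hu' : ‖u‖ ≤ r⁻¹ := by simpa [dist_zero_right] using hu
    rcases lt_or_eq_of_le hu' with h | h
    · exact ((hdsl.differentiableAt (Metric.isOpen_ball.mem_nhds
        (by simpa [dist_zero_right] using h))).continuousAt).continuousWithinAt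
    · have hu0 : u ≠ 0 := norm_pos_iff.1 (by rw [h]; exact hρ)
      have hgc : ContinuousWithinAt (fun v : ℂ => v⁻¹ * g v⁻¹)
          (Metric.closedBall 0 r⁻¹ \ {0}) u := by
        apply ContinuousWithinAt.mul
        · exact (continuousAt_inv₀ hu0).continuousWithinAt
        · refine ContinuousWithinAt.comp (hd.continuousOn u⁻¹ ?_)
            (continuousAt_inv₀ hu0).continuousWithinAt ?_
          · exact hmap u hu0 h.le
          · intro v hv
            exact hmap v hv.2 (by simpa [dist_zero_right] using hv.1)
      have hfil : nhdsWithin u (Metric.closedBall 0 r⁻¹) =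
          nhdsWithin u (Metric.closedBall 0 r⁻¹ \ {0}) := by
        rw [Set.diff_eq, eq_comm]
        exact nhdsWithin_inter_of_mem'
          (mem_nhdsWithin_of_mem_nhds (isOpen_compl_singleton.mem_nhds hu0))
      have hcw : ContinuousWithinAt (fun v : ℂ => v⁻¹ * g v⁻¹)
          (Metric.closedBall 0 r⁻¹) u := by
        unfold ContinuousWithinAt
        rw [hfil]
        exact hgc
      have hev : dslope G 0 =ᶠ[nhdsWithin u (Metric.closedBall 0 r⁻¹)]
          fun v : ℂ => v⁻¹ * g v⁻¹ := by
        rw [hfil]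
        exact Filter.eventuallyEq_of_mem self_mem_nhdsWithin fun v hv => hds_eq v hv.2
      exact hcw.congr_of_eventuallyEq hev (hds_eq u hu0)
  have hdc : DiffContOnCl ℂ (dslope G 0) (Metric.ball 0 r⁻¹) :=
    ⟨hdsl, by rwa [closure_ball 0 hρ.ne']⟩
  have hmax : ∀ u ∈ Metric.closedBall (0:ℂ) r⁻¹, ‖dslope G 0 u‖ ≤ r * C := by
    intro u hu
    refine Complex.norm_le_of_forall_mem_frontier_norm_le Metric.isBounded_ball hdc ?_ ?_
    · intro v hv
      rw [frontier_ball 0 hρ.ne'] at hv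
      have hvn : ‖v‖ = r⁻¹ := by simpa [dist_zero_right] using hv
      have hv0 : v ≠ 0 := norm_pos_iff.1 (by rw [hvn]; exact hρ)
      have hvi : ‖v⁻¹‖ = r := by rw [norm_inv, hvn, inv_inv]
      rw [hds_eq v hv0, norm_mul, norm_inv, hvn, inv_inv]
      exact mul_le_mul_of_nonneg_left (hbound v⁻¹ hvi) hr.le
    · rwa [closure_ball 0 hρ.ne']
  intro w hw
  have hwpos : 0 < ‖w‖ := lt_of_lt_of_le hr hw
  have hw0 : w ≠ 0 := norm_pos_iff.1 hwpos
  have hwin : w⁻¹ ∈ Metric.closedBall (0:ℂ) r⁻¹ := by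
    simp only [Metric.mem_closedBall, dist_zero_right, norm_inv]
    exact inv_anti₀ hr hw
  have h := hmax w⁻¹ hwin
  rw [hds_eq _ (inv_ne_zero hw0), inv_inv, norm_mul] at h
  rw [div_mul_eq_mul_div, le_div_iff₀ hwpos, mul_comm]
  exact h

theorem stmt_14 (r R : ℝ) (hr : 0 < r) (hRr : 16 * r ≤ R)
    (aminus bminus bplus f : ℂ × ℂ → ℂ)
    (ham : DifferentiableOn ℂ aminus {z : ℂ × ℂ | r ≤ ‖z.1‖ ∧ ‖z.2‖ ≤ R})
    (hamdecay : ∀ z2 : ℂ, ‖z2‖ ≤ R →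
      Tendsto (fun w : ℂ => aminus (w, z2)) (cobounded ℂ) (nhds 0))
    (hbm : DifferentiableOn ℂ bminus {z : ℂ × ℂ | ‖z.1‖ ≤ R ∧ r ≤ ‖z.2‖})
    (hbmdecay : ∀ z1 : ℂ, ‖z1‖ ≤ R →
      Tendsto (fun w : ℂ => bminus (z1, w)) (cobounded ℂ) (nhds 0))
    (hbp : DifferentiableOn ℂ bplus {z : ℂ × ℂ | ‖z.1‖ ≤ R ∧ ‖z.2‖ ≤ R})
    (hf : ∀ z : ℂ × ℂ, f z = bplus z + bminus z + aminus z) :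
    supK r R bplus ≤ 8 * supK r R f ∧
    supK r R bminus ≤ 8 * supK r R f ∧
    supK r R aminus ≤ 8 * supK r R f := by
  have hR : 0 < R := lt_of_lt_of_le (by linarith) hRr
  have hrR : r ≤ R := by linarith
  have hKne : (Kset r R).Nonempty := by
    refine ⟨((r : ℂ), (r : ℂ)), ?_⟩
    have : ‖((r : ℝ) : ℂ)‖ = r := by
      rw [Complex.norm_real, Real.norm_eq_abs, abs_of_pos hr]
    exact ⟨this.ge, this.le.trans hrR, this.ge, this.le.trans hrR⟩
  set F := supK r R f with hFdef
  set A := supK r R aminus with hAdef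
  set B := supK r R bminus with hBdef
  set P := supK r R bplus with hPdef
  have hF0 : 0 ≤ F := supK_nonneg r R f
  have hA0 : 0 ≤ A := supK_nonneg r R aminus
  have hB0 : 0 ≤ B := supK_nonneg r R bminus
  have hP0 : 0 ≤ P := supK_nonneg r R bplus
  have hKa : Kset r R ⊆ {z : ℂ × ℂ | r ≤ ‖z.1‖ ∧ ‖z.2‖ ≤ R} := fun z hz => ⟨hz.1, hz.2.2.2⟩
  have hKb : Kset r R ⊆ {z : ℂ × ℂ | ‖z.1‖ ≤ R ∧ r ≤ ‖z.2‖} := fun z hz => ⟨hz.2.1, hz.2.2.1⟩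
  have hKp : Kset r R ⊆ {z : ℂ × ℂ | ‖z.1‖ ≤ R ∧ ‖z.2‖ ≤ R} := fun z hz => ⟨hz.2.1, hz.2.2.2⟩
  have hcf : ContinuousOn f (Kset r R) := by
    have : ContinuousOn (fun z => bplus z + bminus z + aminus z) (Kset r R) :=
      ((hbp.continuousOn.mono hKp).add (hbm.continuousOn.mono hKb)).add
        (ham.continuousOn.mono hKa)
    exact this.congr fun z _ => hf z
  have hfF : ∀ z ∈ Kset r R, ‖f z‖ ≤ F := fun z hz => norm_le_supK hcf hz
  have haA : ∀ z ∈ Kset r R, ‖aminus z‖ ≤ A :=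
    fun z hz => norm_le_supK (ham.continuousOn.mono hKa) hz
  have hbB : ∀ z ∈ Kset r R, ‖bminus z‖ ≤ B :=
    fun z hz => norm_le_supK (hbm.continuousOn.mono hKb) hz
  have hpP : ∀ z ∈ Kset r R, ‖bplus z‖ ≤ P :=
    fun z hz => norm_le_supK (hbp.continuousOn.mono hKp) hz
  -- slices
  have slice_a : ∀ z2 : ℂ, ‖z2‖ ≤ R →
      DifferentiableOn ℂ (fun w => aminus (w, z2)) {w : ℂ | r ≤ ‖w‖} := fun z2 h2 =>
    ham.comp ((differentiable_id.prodMk (differentiable_const z2)).differentiableOn)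
      fun w hw => ⟨hw, h2⟩
  have slice_a2 : ∀ z1 : ℂ, r ≤ ‖z1‖ →
      DifferentiableOn ℂ (fun w => aminus (z1, w)) {w : ℂ | ‖w‖ ≤ R} := fun z1 h1 =>
    ham.comp (((differentiable_const z1).prodMk differentiable_id).differentiableOn)
      fun w hw => ⟨h1, hw⟩
  have slice_b : ∀ z1 : ℂ, ‖z1‖ ≤ R →
      DifferentiableOn ℂ (fun w => bminus (z1, w)) {w : ℂ | r ≤ ‖w‖} := fun z1 h1 =>
    hbm.comp (((differentiable_const z1).prodMk differentiable_id).differentiableOn)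
      fun w hw => ⟨h1, hw⟩
  have slice_b2 : ∀ z2 : ℂ, r ≤ ‖z2‖ →
      DifferentiableOn ℂ (fun w => bminus (w, z2)) {w : ℂ | ‖w‖ ≤ R} := fun z2 h2 =>
    hbm.comp ((differentiable_id.prodMk (differentiable_const z2)).differentiableOn)
      fun w hw => ⟨hw, h2⟩
  have slice_p1 : ∀ z2 : ℂ, ‖z2‖ ≤ R →
      DifferentiableOn ℂ (fun w => bplus (w, z2)) {w : ℂ | ‖w‖ ≤ R} := fun z2 h2 =>
    hbp.comp ((differentiable_id.prodMk (differentiable_const z2)).differentiableOn)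
      fun w hw => ⟨hw, h2⟩
  have slice_p2 : ∀ z1 : ℂ, ‖z1‖ ≤ R →
      DifferentiableOn ℂ (fun w => bplus (z1, w)) {w : ℂ | ‖w‖ ≤ R} := fun z1 h1 =>
    hbp.comp (((differentiable_const z1).prodMk differentiable_id).differentiableOn)
      fun w hw => ⟨h1, hw⟩
  -- Schwarz-type bounds for aminus in the first variable and bminus in the second
  have Sa : ∀ z2 : ℂ, r ≤ ‖z2‖ → ‖z2‖ ≤ R → ∀ w : ℂ, r ≤ ‖w‖ →
      ‖aminus (w, z2)‖ ≤ r / ‖w‖ * A := by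
    intro z2 h1 h2
    exact OV hr hA0 (slice_a z2 h2) (hamdecay z2 h2)
      fun w hw => haA (w, z2) ⟨hw.ge, hw.le.trans hrR, h1, h2⟩
  have Sb : ∀ z1 : ℂ, r ≤ ‖z1‖ → ‖z1‖ ≤ R → ∀ w : ℂ, r ≤ ‖w‖ →
      ‖bminus (z1, w)‖ ≤ r / ‖w‖ * B := by
    intro z1 h1 h2
    exact OV hr hB0 (slice_b z1 h2) (hbmdecay z1 h2)
      fun w hw => hbB (z1, w) ⟨h1, h2, hw.ge, hw.le.trans hrR⟩
  have hfac : r / R ≤ 1 / 16 := by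
    rw [div_le_div_iff₀ hR (by norm_num : (0:ℝ) < 16)]
    linarith
  have Sa16 : ∀ z2 : ℂ, r ≤ ‖z2‖ → ‖z2‖ ≤ R → ∀ w : ℂ, ‖w‖ = R →
      ‖aminus (w, z2)‖ ≤ A / 16 := by
    intro z2 h1 h2 w hw
    have h := Sa z2 h1 h2 w (hw ▸ hrR)
    have h' : r / ‖w‖ * A ≤ A / 16 := by
      rw [hw]
      calc r / R * A ≤ 1 / 16 * A := mul_le_mul_of_nonneg_right hfac hA0
      _ = A / 16 := by ring
    linarith
  have Sb16 : ∀ z1 : ℂ, r ≤ ‖z1‖ → ‖z1‖ ≤ R → ∀ w : ℂ, ‖w‖ = R →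
      ‖bminus (z1, w)‖ ≤ B / 16 := by
    intro z1 h1 h2 w hw
    have h := Sb z1 h1 h2 w (hw ▸ hrR)
    have h' : r / ‖w‖ * B ≤ B / 16 := by
      rw [hw]
      calc r / R * B ≤ 1 / 16 * B := mul_le_mul_of_nonneg_right hfac hB0
      _ = B / 16 := by ring
    linarith
  -- b⁺ chain
  have P1 : ∀ z1 z2 : ℂ, ‖z1‖ = R → ‖z2‖ = R →
      ‖bplus (z1, z2)‖ ≤ F + A / 16 + B / 16 := by
    intro z1 z2 h1 h2
    have hmem : (z1, z2) ∈ Kset r R := ⟨hrR.trans h1.ge, h1.le, hrR.trans h2.ge, h2.le⟩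
    have e : bplus (z1, z2) = f (z1, z2) - bminus (z1, z2) - aminus (z1, z2) := by
      rw [hf]; ring
    have ha := Sa16 z2 (hrR.trans h2.ge) h2.le z1 h1
    have hb := Sb16 z1 (hrR.trans h1.ge) h1.le z2 h2
    have hfb := hfF _ hmem
    have t1 := norm_sub_le (f (z1, z2) - bminus (z1, z2)) (aminus (z1, z2))
    have t2 := norm_sub_le (f (z1, z2)) (bminus (z1, z2))
    rw [e]
    linarith
  have P2 : ∀ z2 : ℂ, ‖z2‖ = R → ∀ z1 : ℂ, ‖z1‖ ≤ R →
      ‖bplus (z1, z2)‖ ≤ F + A / 16 + B / 16 := fun z2 h2 =>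
    MP hR (slice_p1 z2 h2.le) fun w hw => P1 w z2 hw h2
  have P3 : ∀ z1 : ℂ, ‖z1‖ ≤ R → ∀ z2 : ℂ, ‖z2‖ ≤ R →
      ‖bplus (z1, z2)‖ ≤ F + A / 16 + B / 16 := fun z1 h1 =>
    MP hR (slice_p2 z1 h1) fun w hw => P2 w hw z1 h1
  have hPle : P ≤ F + A / 16 + B / 16 := by
    refine supK_le hKne fun z hz => ?_
    have := P3 z.1 hz.2.1 z.2 hz.2.2.2
    simpa using this
  -- a⁻ chain
  have A1 : ∀ w z2 : ℂ, ‖w‖ = r → ‖z2‖ = R →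
      ‖aminus (w, z2)‖ ≤ F + P + B / 16 := by
    intro w z2 h1 h2
    have hmem : (w, z2) ∈ Kset r R := ⟨h1.ge, h1.le.trans hrR, hrR.trans h2.ge, h2.le⟩
    have e : aminus (w, z2) = f (w, z2) - bplus (w, z2) - bminus (w, z2) := by
      rw [hf]; ring
    have hb := Sb16 w h1.ge (h1.le.trans hrR) z2 h2
    have hp := hpP _ hmem
    have hfb := hfF _ hmem
    have t1 := norm_sub_le (f (w, z2) - bplus (w, z2)) (bminus (w, z2))
    have t2 := norm_sub_le (f (w, z2)) (bplus (w, z2))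
    rw [e]
    linarith
  have A2 : ∀ z2 : ℂ, ‖z2‖ = R → ∀ z1 : ℂ, r ≤ ‖z1‖ →
      ‖aminus (z1, z2)‖ ≤ F + P + B / 16 := by
    intro z2 h2 z1 h1
    have hD0 : 0 ≤ F + P + B / 16 := by linarith
    have h := OV hr hD0 (slice_a z2 h2.le) (hamdecay z2 h2.le)
      (fun w hw => A1 w z2 hw h2) z1 h1
    have hfac1 : r / ‖z1‖ ≤ 1 := div_le_one_of_le₀ h1 (norm_nonneg _)
    have := mul_le_mul_of_nonneg_right hfac1 hD0
    rw [one_mul] at this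
    linarith
  have A3 : ∀ z ∈ Kset r R, ‖aminus z‖ ≤ F + P + B / 16 := by
    intro z hz
    have := MP hR (slice_a2 z.1 hz.1) (fun w hw => A2 w hw z.1 hz.1) z.2 hz.2.2.2
    simpa using this
  have hAle : A ≤ F + P + B / 16 := supK_le hKne A3
  -- b⁻ chain
  have B1 : ∀ z1 w : ℂ, ‖z1‖ = R → ‖w‖ = r →
      ‖bminus (z1, w)‖ ≤ F + P + A / 16 := by
    intro z1 w h1 h2
    have hmem : (z1, w) ∈ Kset r R := ⟨hrR.trans h1.ge, h1.le, h2.ge, h2.le.trans hrR⟩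
    have e : bminus (z1, w) = f (z1, w) - bplus (z1, w) - aminus (z1, w) := by
      rw [hf]; ring
    have ha := Sa16 w h2.ge (h2.le.trans hrR) z1 h1
    have hp := hpP _ hmem
    have hfb := hfF _ hmem
    have t1 := norm_sub_le (f (z1, w) - bplus (z1, w)) (aminus (z1, w))
    have t2 := norm_sub_le (f (z1, w)) (bplus (z1, w))
    rw [e]
    linarith
  have B2 : ∀ z1 : ℂ, ‖z1‖ = R → ∀ z2 : ℂ, r ≤ ‖z2‖ →
      ‖bminus (z1, z2)‖ ≤ F + P + A / 16 := by
    intro z1 h1 z2 h2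
    have hD0 : 0 ≤ F + P + A / 16 := by linarith
    have h := OV hr hD0 (slice_b z1 h1.le) (hbmdecay z1 h1.le)
      (fun w hw => B1 z1 w h1 hw) z2 h2
    have hfac1 : r / ‖z2‖ ≤ 1 := div_le_one_of_le₀ h2 (norm_nonneg _)
    have := mul_le_mul_of_nonneg_right hfac1 hD0
    rw [one_mul] at this
    linarith
  have B3 : ∀ z ∈ Kset r R, ‖bminus z‖ ≤ F + P + A / 16 := by
    intro z hz
    have := MP hR (slice_b2 z.2 hz.2.2.1) (fun w hw => B2 w hw z.2 hz.2.2.1) z.1 hz.2.1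
    simpa using this
  have hBle : B ≤ F + P + A / 16 := supK_le hKne B3
  refine ⟨by linarith, by linarith, by linarith⟩
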